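/- Let m ≥ 2 be an integer and ω ∈ (0, m−1] irrational. With the m-adic continued fraction digits bₙ(ω), iterates τ_m^n(ω), and convergents ωₙ = pₙ/qₙ, one has |ω − ωₙ| ≥ m^{b₁+⋯+bₙ} / (qₙ·(qₙ₊₁ + (m−1)·m^{bₙ₊₁}·qₙ)) > 0 for all n ≥ 1. -/

import Mathlib

noncomputable def b1 (m : ℕ) (x : ℝ) : ℤ := ⌊Real.log x⁻¹ / Real.log m⌋

noncomputable def tau (m : ℕ) (x : ℝ) : ℝ :=
  (m : ℝ) ^ (Real.log x⁻¹ / Real.log m - (b1 m x : ℝ)) - 1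

noncomputable def digit (m : ℕ) (ω : ℝ) (n : ℕ) : ℤ := b1 m ((tau m)^[n - 1] ω)

lemma tau_key (m : ℕ) (hm : 2 ≤ m) {x : ℝ} (hx : Irrational x) (hx0 : 0 < x) :
    Irrational (tau m x) ∧ 0 < tau m x ∧ tau m x < (m : ℝ) - 1 ∧
      x * ((m : ℝ) ^ (b1 m x) * (1 + tau m x)) = 1 := by
  have hm2 : (2:ℝ) ≤ m := by exact_mod_cast hm
  have hM1 : (1 : ℝ) < m := by linarith
  have hM0 : (0 : ℝ) < m := by linarith
  set θ := Real.log x⁻¹ / Real.log m with hθ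
  have hlogm : Real.log m ≠ 0 := ne_of_gt (Real.log_pos hM1)
  have hpow : (m:ℝ) ^ θ = x⁻¹ := by
    rw [Real.rpow_def_of_pos hM0, hθ, mul_comm, div_mul_cancel₀ _ hlogm,
      Real.exp_log (inv_pos.2 hx0)]
  have hb1 : b1 m x = ⌊θ⌋ := rfl
  have htau : tau m x = (m:ℝ) ^ (θ - (⌊θ⌋ : ℝ)) - 1 := rfl
  have hf0 : (0:ℝ) ≤ θ - (⌊θ⌋:ℝ) := by linarith [Int.floor_le θ]
  have hf1 : θ - (⌊θ⌋:ℝ) < 1 := by linarith [Int.lt_floor_add_one θ]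
  have h1le : (1:ℝ) ≤ (m:ℝ) ^ (θ - (⌊θ⌋:ℝ)) := Real.one_le_rpow hM1.le hf0
  have hlt : (m:ℝ) ^ (θ - (⌊θ⌋:ℝ)) < (m:ℝ) := by
    calc (m:ℝ) ^ (θ - (⌊θ⌋:ℝ)) < (m:ℝ) ^ (1:ℝ) :=
          Real.rpow_lt_rpow_of_exponent_lt hM1 hf1
      _ = m := Real.rpow_one _
  have hsplit : (m:ℝ) ^ (θ - (⌊θ⌋:ℝ)) = x⁻¹ / (m:ℝ) ^ (⌊θ⌋ : ℤ) := by
    rw [Real.rpow_sub hM0, hpow, Real.rpow_intCast]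
  have hmQ : ((m:ℚ) ^ (⌊θ⌋:ℤ))⁻¹ ≠ 0 := by
    apply inv_ne_zero
    apply zpow_ne_zero
    exact_mod_cast (by omega : m ≠ 0)
  have hr : tau m x = x⁻¹ * (((((m:ℚ) ^ (⌊θ⌋:ℤ))⁻¹ : ℚ)) : ℝ) - ((1:ℤ):ℝ) := by
    rw [htau, hsplit]
    push_cast
    rw [div_eq_mul_inv]
  have hirr : Irrational (tau m x) := by
    rw [hr]; exact (hx.inv.mul_ratCast hmQ).sub_intCast 1
  have htnn : 0 ≤ tau m x := by rw [htau]; linarith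
  have htpos : 0 < tau m x := htnn.lt_of_ne' hirr.ne_zero
  refine ⟨hirr, htpos, by rw [htau]; linarith, ?_⟩
  rw [hb1, htau, hsplit]
  have hz : ((m:ℝ) ^ (⌊θ⌋:ℤ)) ≠ 0 := zpow_ne_zero _ hM0.ne'
  field_simp
  ring

theorem abs_error_lower_bound (m : ℕ) (hm : 2 ≤ m) (ω : ℝ) (hω : Irrational ω) (hω0 : 0 < ω) (hω1 : ω ≤ (m : ℝ) - 1)
    (p q : ℕ → ℝ)
    (hp0 : p 0 = 0) (hq0 : q 0 = 1) (hp1 : p 1 = 1) (hq1 : q 1 = (m : ℝ) ^ (digit m ω 1))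
    (hp : ∀ n, 2 ≤ n → p n = (m : ℝ) ^ (digit m ω n) * p (n - 1) + (m : ℝ) ^ (digit m ω (n - 1)) * p (n - 2))
    (hq : ∀ n, 2 ≤ n → q n = (m : ℝ) ^ (digit m ω n) * q (n - 1) + (m : ℝ) ^ (digit m ω (n - 1)) * q (n - 2)) :
    ∀ n, 1 ≤ n →
      (m : ℝ) ^ (∑ k ∈ Finset.Icc 1 n, digit m ω k) /
          (q n * (q (n + 1) + ((m : ℝ) - 1) * (m : ℝ) ^ (digit m ω (n + 1)) * q n)) ≤
        |ω - p n / q n| ∧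
      0 < (m : ℝ) ^ (∑ k ∈ Finset.Icc 1 n, digit m ω k) /
          (q n * (q (n + 1) + ((m : ℝ) - 1) * (m : ℝ) ^ (digit m ω (n + 1)) * q n)) := by
  have hm2 : (2:ℝ) ≤ m := by exact_mod_cast hm
  have hM0 : (0:ℝ) < m := by linarith
  set M : ℝ := (m : ℝ) with hM
  set t : ℕ → ℝ := fun n => (tau m)^[n] ω with ht
  have hts : ∀ n, t (n + 1) = tau m (t n) := fun n => Function.iterate_succ_apply' _ _ _
  -- invariant
  have hinv : ∀ n, Irrational (t n) ∧ 0 < t n ∧ t n ≤ M - 1 := by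
    intro n
    induction n with
    | zero => exact ⟨hω, hω0, hω1⟩
    | succ k ih =>
      obtain ⟨h1, h2, h3⟩ := ih
      obtain ⟨a, b, c, _⟩ := tau_key m hm h1 h2
      exact ⟨by rwa [hts], by rwa [hts], by rw [hts]; exact c.le⟩
  have hdig : ∀ k : ℕ, digit m ω (k + 1) = b1 m (t k) := fun k => rfl
  -- key functional relation
  have hrel : ∀ n : ℕ, t n * (M ^ (digit m ω (n + 1)) * (1 + t (n + 1))) = 1 := by
    intro n
    obtain ⟨h1, h2, _⟩ := hinv n
    obtain ⟨_, _, _, h4⟩ := tau_key m hm h1 h2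
    rw [hdig, hts]
    exact h4
  -- positivity of q
  have hqpos : ∀ n, 0 < q n := by
    have key : ∀ n, 0 < q n ∧ 0 < q (n + 1) := by
      intro n
      induction n with
      | zero =>
        refine ⟨by rw [hq0]; norm_num, ?_⟩
        rw [hq1]; exact zpow_pos hM0 _
      | succ k ih =>
        refine ⟨ih.2, ?_⟩
        have h2 : q (k + 2) = M ^ (digit m ω (k + 2)) * q (k + 1)
            + M ^ (digit m ω (k + 1)) * q k := hq (k + 2) (by omega)
        rw [h2]
        have := zpow_pos hM0 (digit m ω (k + 2))
        have := zpow_pos hM0 (digit m ω (k + 1))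
        nlinarith [ih.1, ih.2]
    exact fun n => (key n).1
  -- convergent identity
  have hA : ∀ n : ℕ, ω * (q (n + 1) + t (n + 1) * M ^ (digit m ω (n + 1)) * q n)
      = p (n + 1) + t (n + 1) * M ^ (digit m ω (n + 1)) * p n := by
    intro n
    induction n with
    | zero =>
      rw [hp0, hq0, hp1, hq1]
      have h := hrel 0
      have h0 : t 0 = ω := rfl
      rw [h0] at h
      linear_combination h
    | succ k ih =>
      have hq2 : q (k + 2) = M ^ (digit m ω (k + 2)) * q (k + 1)
          + M ^ (digit m ω (k + 1)) * q k := hq (k + 2) (by omega)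
      have hp2 : p (k + 2) = M ^ (digit m ω (k + 2)) * p (k + 1)
          + M ^ (digit m ω (k + 1)) * p k := hp (k + 2) (by omega)
      have hr := hrel (k + 1)
      rw [hq2, hp2]
      linear_combination (M ^ (digit m ω (k + 2)) * (1 + t (k + 2))) * ih
        + (p k - ω * q k) * M ^ (digit m ω (k + 1)) * hr
  -- determinant identity
  have hC : ∀ n : ℕ, p n * q (n + 1) - p (n + 1) * q n
      = (-1 : ℝ) ^ (n + 1) * M ^ (∑ k ∈ Finset.Icc 1 n, digit m ω k) := by
    intro n
    induction n with
    | zero =>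
      rw [hp0, hq0, hp1]
      simp
    | succ k ih =>
      have hq2 : q (k + 2) = M ^ (digit m ω (k + 2)) * q (k + 1)
          + M ^ (digit m ω (k + 1)) * q k := hq (k + 2) (by omega)
      have hp2 : p (k + 2) = M ^ (digit m ω (k + 2)) * p (k + 1)
          + M ^ (digit m ω (k + 1)) * p k := hp (k + 2) (by omega)
      have hS : ∑ j ∈ Finset.Icc 1 (k + 1), digit m ω j
          = (∑ j ∈ Finset.Icc 1 k, digit m ω j) + digit m ω (k + 1) :=
        Finset.sum_Icc_succ_top (by omega) _
      rw [hq2, hp2, hS, zpow_add₀ hM0.ne']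
      linear_combination (- (M ^ (digit m ω (k + 1)))) * ih
  -- main conclusion
  intro n hn
  obtain ⟨k, rfl⟩ : ∃ k, n = k + 1 := ⟨n - 1, by omega⟩
  set S : ℤ := ∑ j ∈ Finset.Icc 1 (k + 1), digit m ω j with hSdef
  have hSpos : (0:ℝ) < M ^ S := zpow_pos hM0 _
  have hq1p := hqpos (k + 1)
  have hq2p := hqpos (k + 2)
  have hMb : (0:ℝ) < M ^ (digit m ω (k + 2)) := zpow_pos hM0 _
  obtain ⟨_, htp, htle⟩ := hinv (k + 2)
  have hDpos : 0 < q (k + 2) + t (k + 2) * M ^ (digit m ω (k + 2)) * q (k + 1) := by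
    have : 0 < t (k + 2) * M ^ (digit m ω (k + 2)) * q (k + 1) := by positivity
    linarith
  have hA' := hA (k + 1)
  have hC' := hC (k + 1)
  have key : ω * q (k + 1) - p (k + 1)
      = ((-1 : ℝ) ^ (k + 1) * M ^ S)
        / (q (k + 2) + t (k + 2) * M ^ (digit m ω (k + 2)) * q (k + 1)) := by
    rw [eq_div_iff hDpos.ne']
    linear_combination q (k + 1) * hA' - hC'
  have habs : |ω - p (k + 1) / q (k + 1)|
      = M ^ S / ((q (k + 2) + t (k + 2) * M ^ (digit m ω (k + 2)) * q (k + 1)) * q (k + 1)) := by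
    have h1 : ω - p (k + 1) / q (k + 1) = (ω * q (k + 1) - p (k + 1)) / q (k + 1) := by
      field_simp
    rw [h1, key, div_div, abs_div, abs_mul, abs_pow, abs_neg, abs_one, one_pow, one_mul,
      abs_of_pos hSpos, abs_of_pos (mul_pos hDpos hq1p)]
  constructor
  · rw [habs]
    apply div_le_div_of_nonneg_left hSpos.le (by positivity)
    have h1 : t (k + 2) * M ^ (digit m ω (k + 2)) * q (k + 1)
        ≤ (M - 1) * M ^ (digit m ω (k + 2)) * q (k + 1) := by
      apply mul_le_mul_of_nonneg_right _ hq1p.le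
      exact mul_le_mul_of_nonneg_right htle hMb.le
    nlinarith
  · apply div_pos hSpos
    have : 0 < (M - 1) * M ^ (digit m ω (k + 2)) * q (k + 1) := by
      apply mul_pos (mul_pos (by linarith) hMb) hq1p
    nlinarith
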